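/- In the two-agent, two-good economy with X₁ = (-∞,0] × [0,∞), X₂ = [0,∞) × (-∞,0], endowments e₁ = (-1/2, 1), e₂ = (1, -1/2), and utilities uᵢ(x¹,x²) = -(|x¹|+|x²|) if |x¹|+|x²| ≤ 3/2 and uᵢ = -3/2 otherwise, the price p̄ = (-1/√2, -1/√2) with allocation x̄₁ = (0, 1/2), x̄₂ = (1/2, 0) is a Walrasian equilibrium. -/

import Mathlib

open RealInnerProductSpace

noncomputable def u13 : EuclideanSpace ℝ (Fin 2) → ℝ := fun x =>
  if |x 0| + |x 1| ≤ 3 / 2 then -(|x 0| + |x 1|) else -(3 / 2)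

lemma u13_le (y : EuclideanSpace ℝ (Fin 2)) (h : (1:ℝ)/2 ≤ |y 0| + |y 1|) :
    u13 y ≤ -(1/2) := by
  unfold u13
  split <;> linarith

/-- In the economy of Example 4.1, the price `p̄ = (-1/√2, -1/√2)` with allocation
`x̄₁ = (0, 1/2)`, `x̄₂ = (1/2, 0)` is a Walrasian equilibrium. -/
theorem stmt_13
    (X₁ : Set (EuclideanSpace ℝ (Fin 2))) (hX₁ : X₁ = {x | x 0 ≤ 0 ∧ 0 ≤ x 1})
    (X₂ : Set (EuclideanSpace ℝ (Fin 2))) (hX₂ : X₂ = {x | 0 ≤ x 0 ∧ x 1 ≤ 0})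
    (e₁ e₂ : EuclideanSpace ℝ (Fin 2))
    (he₁ : e₁ = WithLp.toLp 2 (fun i => if i = 0 then -(1 / 2 : ℝ) else 1))
    (he₂ : e₂ = WithLp.toLp 2 (fun i => if i = 0 then (1 : ℝ) else -(1 / 2)))
    (pbar : EuclideanSpace ℝ (Fin 2)) (hpbar : pbar = WithLp.toLp 2 (fun _ => -(1 / Real.sqrt 2)))
    (x₁ x₂ : EuclideanSpace ℝ (Fin 2))
    (hx₁ : x₁ = WithLp.toLp 2 (fun i => if i = 0 then (0 : ℝ) else 1 / 2))
    (hx₂ : x₂ = WithLp.toLp 2 (fun i => if i = 0 then (1 / 2 : ℝ) else 0)) :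
    pbar ≠ 0 ∧
    (x₁ ∈ X₁ ∧ ⟪pbar, x₁⟫ ≤ ⟪pbar, e₁⟫) ∧
    (x₂ ∈ X₂ ∧ ⟪pbar, x₂⟫ ≤ ⟪pbar, e₂⟫) ∧
    (∀ y ∈ X₁, ⟪pbar, y⟫ ≤ ⟪pbar, e₁⟫ → u13 y ≤ u13 x₁) ∧
    (∀ y ∈ X₂, ⟪pbar, y⟫ ≤ ⟪pbar, e₂⟫ → u13 y ≤ u13 x₂) ∧
    x₁ + x₂ = e₁ + e₂ := by
  have hs2 : (0:ℝ) < Real.sqrt 2 := Real.sqrt_pos.2 (by norm_num)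
  have hinv : (0:ℝ) < 1 / Real.sqrt 2 := by positivity
  subst hX₁ hX₂ he₁ he₂ hpbar hx₁ hx₂
  have hux₁ : u13 (WithLp.toLp 2 (fun i => if i = 0 then (0 : ℝ) else 1 / 2)) = -(1/2) := by
    unfold u13; norm_num [abs_of_nonneg]
  have hux₂ : u13 (WithLp.toLp 2 (fun i => if i = 0 then (1 / 2 : ℝ) else 0)) = -(1/2) := by
    unfold u13; norm_num [abs_of_nonneg]
  refine ⟨?_, ⟨?_, ?_⟩, ⟨?_, ?_⟩, ?_, ?_, ?_⟩
  · intro h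
    have := congrArg (fun v => v 0) h
    simp at this
  · constructor <;> norm_num
  · simp [PiLp.inner_apply, Fin.sum_univ_two]; linarith
  · constructor <;> norm_num
  · simp [PiLp.inner_apply, Fin.sum_univ_two]; linarith
  · intro y hy hb
    rw [hux₁]
    simp only [PiLp.inner_apply, Fin.sum_univ_two, RCLike.inner_apply, conj_trivial] at hb
    norm_num at hb
    obtain ⟨h0, h1⟩ := hy
    have hsum : (1:ℝ)/2 ≤ y 0 + y 1 := by
      have hsi : (0:ℝ) < (Real.sqrt 2)⁻¹ := by positivity
      by_contra hlt
      push_neg at hlt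
      have h2 := mul_lt_mul_of_pos_left hlt hsi
      nlinarith [hb]
    apply u13_le
    rw [abs_of_nonpos h0, abs_of_nonneg h1]
    linarith
  · intro y hy hb
    rw [hux₂]
    simp only [PiLp.inner_apply, Fin.sum_univ_two, RCLike.inner_apply, conj_trivial] at hb
    norm_num at hb
    obtain ⟨h0, h1⟩ := hy
    have hsum : (1:ℝ)/2 ≤ y 0 + y 1 := by
      have hsi : (0:ℝ) < (Real.sqrt 2)⁻¹ := by positivity
      by_contra hlt
      push_neg at hlt
      have h2 := mul_lt_mul_of_pos_left hlt hsi
      nlinarith [hb]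
    apply u13_le
    rw [abs_of_nonneg h0, abs_of_nonpos h1]
    linarith
  · ext i
    fin_cases i <;> simp <;> norm_num
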